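/- Let G be a connected weighted undirected graph with adjacency matrix A, let e = (i,j) be a cut-edge, and let Ĝ be the graph with adjacency matrix Â = A + a_{ij}(e_i - e_j)(e_i - e_j)ᵀ (remove edge e, add loops of weight a_{ij} at i and j). Order the vertices so that those of the component Ĝ₁ containing i come first, partitioning P = D_A⁻¹A into blocks [[P₁₁, P₁₂],[P₂₁, P₂₂]]. Then the stochastic matrix P̂₁ of the random walk on Ĝ₁ equals the stochastic complement P₁₁ + P₁₂(I - P₂₂)⁻¹P₂₁. -/

import Mathlib

open Matrix

private lemma pow_entry_nonneg' {n : Type*} [Fintype n] [DecidableEq n]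
    {A : Matrix n n ℝ} (h : ∀ a b, 0 ≤ A a b) :
    ∀ k a b, 0 ≤ (A ^ k) a b := by
  intro k
  induction k with
  | zero =>
    intro a b
    rw [pow_zero, Matrix.one_apply]
    split <;> norm_num
  | succ k ih =>
    intro a b
    rw [pow_succ, Matrix.mul_apply]
    exact Finset.sum_nonneg fun c _ => mul_nonneg (ih a c) (h c b)

/-- for a cut-edge `e = (i,j)` of a connected weighted graph, the
stochastic matrix of the random walk on the component `Ĝ₁` (obtained by deleting
`e` and adding a loop of weight `a_{ij}` at `i`) equals the stochastic
complement `P₁₁ + P₁₂(I - P₂₂)⁻¹P₂₁` of `P = D_A⁻¹A`.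

Vertices are ordered so that those of `Ĝ₁` come first: the index type is
`Fin n₁ ⊕ Fin n₂`, with the vertices of `Ĝ₁` in the first summand. -/
theorem stochastic_complement_cut_edge {n₁ n₂ : ℕ}
    (A : Matrix (Fin n₁ ⊕ Fin n₂) (Fin n₁ ⊕ Fin n₂) ℝ)
    (hsym : A.IsSymm)
    (hnonneg : ∀ a b, 0 ≤ A a b)
    -- `G` is connected:
    (hconn : ∀ a b, ∃ k : ℕ, 0 < (A ^ k) a b)
    (i : Fin n₁) (j : Fin n₂)
    -- `e = (i,j)` is an edge, and it is the only edge between the two blocks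
    -- (so it is a cut-edge separating the two blocks):
    (hedge : 0 < A (Sum.inl i) (Sum.inr j))
    (hcut : ∀ a b, A (Sum.inl a) (Sum.inr b) ≠ 0 → a = i ∧ b = j)
    (d : Fin n₁ ⊕ Fin n₂ → ℝ) (hd : d = A.mulVec (fun _ => 1))
    (hdpos : ∀ a, 0 < d a)
    (P : Matrix (Fin n₁ ⊕ Fin n₂) (Fin n₁ ⊕ Fin n₂) ℝ)
    (hP : P = (Matrix.diagonal d)⁻¹ * A)
    -- adjacency matrix of `Ĝ₁`: the `(1,1)` block of `A` plus the loop at `i`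
    (A₁ : Matrix (Fin n₁) (Fin n₁) ℝ)
    (hA₁ : A₁ = A.toBlocks₁₁ +
      A (Sum.inl i) (Sum.inr j) • Matrix.single i i 1)
    (d₁ : Fin n₁ → ℝ) (hd₁ : d₁ = A₁.mulVec (fun _ => 1)) :
    (Matrix.diagonal d₁)⁻¹ * A₁
      = P.toBlocks₁₁ + P.toBlocks₁₂ * (1 - P.toBlocks₂₂)⁻¹ * P.toBlocks₂₁ := by
  -- notation
  set a₀ : ℝ := A (Sum.inl i) (Sum.inr j) with ha₀
  have hsym' : ∀ x y, A x y = A y x := fun x y => (Matrix.IsSymm.apply hsym y x)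
  -- the off-diagonal blocks of `A`
  have hA12 : ∀ (x : Fin n₁) (c : Fin n₂),
      A (Sum.inl x) (Sum.inr c) = if x = i ∧ c = j then a₀ else 0 := by
    intro x c
    by_cases h : x = i ∧ c = j
    · rw [if_pos h, h.1, h.2]
    · rw [if_neg h]
      by_contra hne
      exact h (hcut x c hne)
  have hA21 : ∀ (c : Fin n₂) (x : Fin n₁),
      A (Sum.inr c) (Sum.inl x) = if x = i ∧ c = j then a₀ else 0 := by
    intro c x
    rw [hsym' (Sum.inr c) (Sum.inl x), hA12]
  have hdne : ∀ x, d x ≠ 0 := fun x => ne_of_gt (hdpos x)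
  -- entries of `P`
  have hinvd : (Matrix.diagonal d)⁻¹ = Matrix.diagonal (fun x => (d x)⁻¹) := by
    refine Matrix.inv_eq_right_inv ?_
    rw [Matrix.diagonal_mul_diagonal,
      show (fun x => d x * (d x)⁻¹) = fun _ => (1:ℝ) from funext fun x => mul_inv_cancel₀ (hdne x),
      Matrix.diagonal_one]
  have hPapp : ∀ x y, P x y = (d x)⁻¹ * A x y := by
    intro x y
    rw [hP, hinvd, Matrix.diagonal_mul]
  -- row-sum decomposition of `d`
  have hdinl : ∀ x : Fin n₁,
      d (Sum.inl x) = (∑ b, A (Sum.inl x) (Sum.inl b)) + (if x = i then a₀ else 0) := by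
    intro x
    rw [hd]
    simp only [Matrix.mulVec, dotProduct, mul_one]
    rw [Fintype.sum_sum_type]
    congr 1
    simp only [hA12]
    by_cases hx : x = i
    · simp [hx]
    · simp [hx]
  have hdinr : ∀ c : Fin n₂,
      d (Sum.inr c) = (∑ b, A (Sum.inr c) (Sum.inr b)) + (if c = j then a₀ else 0) := by
    intro c
    rw [hd]
    simp only [Matrix.mulVec, dotProduct, mul_one]
    rw [Fintype.sum_sum_type, add_comm]
    congr 1
    simp only [hA21]
    by_cases hc : c = j
    · simp [hc]
    · simp [hc]
  -- d₁ = d ∘ inl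
  have hd₁eq : ∀ x : Fin n₁, d₁ x = d (Sum.inl x) := by
    intro x
    rw [hd₁, hA₁, hdinl]
    simp only [Matrix.mulVec, dotProduct, Matrix.add_apply, Matrix.smul_apply, mul_one,
      Matrix.single, Matrix.of_apply, smul_eq_mul]
    rw [Finset.sum_add_distrib]
    congr 1
    by_cases hx : x = i
    · rw [if_pos hx]
      rw [Finset.sum_eq_single i (fun b _ hb => by simp [Ne.symm hb]) (by simp)]
      simp [hx]
    · rw [if_neg hx]
      exact Finset.sum_eq_zero (fun b _ => by rw [if_neg (fun h => hx h.1.symm), mul_zero])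
  have hd₁ne : ∀ x, d₁ x ≠ 0 := fun x => by rw [hd₁eq]; exact hdne _
  have hinvd₁ : (Matrix.diagonal d₁)⁻¹ = Matrix.diagonal (fun x => (d₁ x)⁻¹) := by
    refine Matrix.inv_eq_right_inv ?_
    rw [Matrix.diagonal_mul_diagonal,
      show (fun x => d₁ x * (d₁ x)⁻¹) = fun _ => (1:ℝ) from
        funext fun x => mul_inv_cancel₀ (hd₁ne x),
      Matrix.diagonal_one]
  -- the (2,2) block
  set B : Matrix (Fin n₂) (Fin n₂) ℝ := A.toBlocks₂₂ with hB
  have hBapp : ∀ c b, B c b = A (Sum.inr c) (Sum.inr b) := fun c b => rfl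
  have hBnonneg : ∀ c b, 0 ≤ B c b := fun c b => hnonneg _ _
  have hP22 : ∀ c b, P.toBlocks₂₂ c b = (d (Sum.inr c))⁻¹ * B c b := by
    intro c b
    exact hPapp (Sum.inr c) (Sum.inr b)
  -- reachability inside block 2
  have reach : ∀ c : Fin n₂, ∃ m : ℕ, 0 < (B ^ m) c j := by
    have key : ∀ (k : ℕ) (c : Fin n₂) (b : Fin n₁),
        0 < (A ^ k) (Sum.inr c) (Sum.inl b) → ∃ m : ℕ, 0 < (B ^ m) c j := by
      intro k
      induction k with
      | zero =>
        intro c b h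
        rw [pow_zero, Matrix.one_apply_ne (by simp)] at h
        exact absurd h (lt_irrefl 0)
      | succ k ih =>
        intro c b h
        rw [pow_succ', Matrix.mul_apply] at h
        have : ∃ x, A (Sum.inr c) x * (A ^ k) x (Sum.inl b) ≠ 0 := by
          by_contra hcon
          push_neg at hcon
          rw [Finset.sum_eq_zero (fun x _ => hcon x)] at h
          exact absurd h (lt_irrefl 0)
        obtain ⟨x, hx⟩ := this
        have h1 : 0 < A (Sum.inr c) x :=
          lt_of_le_of_ne (hnonneg _ _) (fun he => hx (by rw [← he, zero_mul]))
        have h2 : (A ^ k) x (Sum.inl b) ≠ 0 := fun he => hx (by rw [he, mul_zero])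
        cases x with
        | inl b' =>
          have := hcut b' c (by rw [← hsym' (Sum.inr c) (Sum.inl b')]; exact ne_of_gt h1)
          refine ⟨0, ?_⟩
          rw [this.2, pow_zero, Matrix.one_apply_eq]
          norm_num
        | inr c' =>
          obtain ⟨m, hm⟩ := ih c' b
            (lt_of_le_of_ne (pow_entry_nonneg' hnonneg k _ _) (Ne.symm h2))
          refine ⟨m + 1, ?_⟩
          rw [pow_succ', Matrix.mul_apply]
          have hle : B c c' * (B ^ m) c' j ≤ ∑ x, B c x * (B ^ m) x j :=
            Finset.single_le_sum
              (fun x _ => mul_nonneg (hBnonneg c x) (pow_entry_nonneg' hBnonneg m x j))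
              (Finset.mem_univ c')
          exact lt_of_lt_of_le (mul_pos h1 hm) hle
    intro c
    obtain ⟨k, hk⟩ := hconn (Sum.inr c) (Sum.inl i)
    exact key k c i hk
  -- row sums of P₂₂
  have hrowsum : ∀ c, ∑ b, P.toBlocks₂₂ c b = 1 - (if c = j then a₀ else 0) / d (Sum.inr c) := by
    intro c
    simp only [hP22]
    rw [← Finset.mul_sum]
    have hs : ∑ b, B c b = d (Sum.inr c) - (if c = j then a₀ else 0) := by
      rw [hdinr c]; ring_nf; rfl
    rw [hs, mul_sub, inv_mul_cancel₀ (hdne _), div_eq_inv_mul]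
  -- kernel of 1 - P₂₂ is trivial
  have hker : ∀ v : Fin n₂ → ℝ, (1 - P.toBlocks₂₂) *ᵥ v = 0 → v = 0 := by
    intro v hv
    have hveq : ∀ c, v c = ∑ b, P.toBlocks₂₂ c b * v b := by
      intro c
      have := congrFun hv c
      simp only [Matrix.sub_mulVec, Matrix.one_mulVec, Pi.sub_apply, Pi.zero_apply,
        sub_eq_zero] at this
      rw [this, Matrix.mulVec, dotProduct]
    -- helper: any harmonic-type vector is ≤ 0
    have helper : ∀ w : Fin n₂ → ℝ, (∀ c, w c = ∑ b, P.toBlocks₂₂ c b * w b) →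
        ∀ c, w c ≤ 0 := by
      intro w hw c
      obtain ⟨c₀, _, hc₀⟩ := Finset.exists_max_image Finset.univ w ⟨j, Finset.mem_univ j⟩
      set t := w c₀ with ht
      by_contra hcon
      push_neg at hcon
      have htpos : 0 < t := lt_of_lt_of_le hcon (hc₀ c (Finset.mem_univ c))
      -- any vertex with w = t has all its B-neighbours with w = t, and is not j
      have hclosed : ∀ c', w c' = t → (c' ≠ j ∧ ∀ b, 0 < B c' b → w b = t) := by
        intro c' hc'
        have hle : ∀ b ∈ Finset.univ, P.toBlocks₂₂ c' b * w b ≤ P.toBlocks₂₂ c' b * t := by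
          intro b _
          exact mul_le_mul_of_nonneg_left (hc₀ b (Finset.mem_univ b))
            (by rw [hP22]; exact mul_nonneg (le_of_lt (inv_pos.2 (hdpos _))) (hBnonneg _ _))
        have hsumle : ∑ b, P.toBlocks₂₂ c' b * w b ≤ (∑ b, P.toBlocks₂₂ c' b) * t := by
          rw [Finset.sum_mul]
          exact Finset.sum_le_sum hle
        constructor
        · intro hcj
          have h1 : t ≤ (∑ b, P.toBlocks₂₂ c' b) * t :=
            le_trans (le_of_eq (by rw [← hc']; exact hw c')) hsumle
          have h2 : ∑ b, P.toBlocks₂₂ c' b = 1 - a₀ / d (Sum.inr c') := by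
            rw [hrowsum, if_pos hcj, hcj]
          rw [h2] at h1
          nlinarith [mul_pos (div_pos hedge (hdpos (Sum.inr j))) htpos,
            div_pos hedge (hdpos (Sum.inr j)), htpos, hcj ▸ h1]
        · intro b hb
          by_contra hwb
          have hwblt : w b < t := lt_of_le_of_ne (hc₀ b (Finset.mem_univ b)) hwb
          have hPpos : 0 < P.toBlocks₂₂ c' b := by
            rw [hP22]
            exact mul_pos (inv_pos.2 (hdpos _)) hb
          have hstrict : ∑ x, P.toBlocks₂₂ c' x * w x < ∑ x, P.toBlocks₂₂ c' x * t :=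
            Finset.sum_lt_sum hle ⟨b, Finset.mem_univ b,
              mul_lt_mul_of_pos_left hwblt hPpos⟩
          have hub : ∑ x, P.toBlocks₂₂ c' x * t ≤ t := by
            rw [← Finset.sum_mul, hrowsum]
            have h1 : (if c' = j then a₀ else 0) / d (Sum.inr c') ≥ 0 := by
              split
              · exact le_of_lt (div_pos hedge (hdpos _))
              · simp
            nlinarith
          rw [← hw c', hc'] at hstrict
          exact absurd (lt_of_lt_of_le hstrict hub) (lt_irrefl t)
      -- propagate along a path to j
      have hprop : ∀ (m : ℕ) (c' : Fin n₂), 0 < (B ^ m) c' j → w c' = t → w j = t := by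
        intro m
        induction m with
        | zero =>
          intro c' h hc'
          rw [pow_zero, Matrix.one_apply] at h
          split at h
          · next he => rw [← he]; exact hc'
          · exact absurd h (lt_irrefl 0)
        | succ m ih =>
          intro c' h hc'
          rw [pow_succ', Matrix.mul_apply] at h
          have : ∃ x, B c' x * (B ^ m) x j ≠ 0 := by
            by_contra hcon2
            push_neg at hcon2
            rw [Finset.sum_eq_zero (fun x _ => hcon2 x)] at h
            exact absurd h (lt_irrefl 0)
          obtain ⟨x, hx⟩ := this
          have h1 : 0 < B c' x :=
            lt_of_le_of_ne (hBnonneg _ _) (fun he => hx (by rw [← he, zero_mul]))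
          have h2 : 0 < (B ^ m) x j :=
            lt_of_le_of_ne (pow_entry_nonneg' hBnonneg m _ _)
              (Ne.symm (fun he => hx (by rw [he, mul_zero])))
          exact ih x h2 ((hclosed c' hc').2 x h1)
      obtain ⟨m, hm⟩ := reach c₀
      have hwj : w j = t := hprop m c₀ hm rfl
      exact (hclosed j hwj).1 rfl
    have hneg : ∀ c, (-v) c = ∑ b, P.toBlocks₂₂ c b * (-v) b := by
      intro c
      simp only [Pi.neg_apply, mul_neg, Finset.sum_neg_distrib, neg_inj]
      exact hveq c
    funext c
    exact le_antisymm (helper v hveq c) (by have := helper (-v) hneg c; simpa using this)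
  -- invertibility
  have hdet : (1 - P.toBlocks₂₂).det ≠ 0 := by
    intro hdet0
    obtain ⟨v, hvne, hv⟩ := Matrix.exists_mulVec_eq_zero_iff.2 hdet0
    exact hvne (hker v hv)
  have hunit : IsUnit (1 - P.toBlocks₂₂).det := isUnit_iff_ne_zero.2 hdet
  set N : Matrix (Fin n₂) (Fin n₂) ℝ := (1 - P.toBlocks₂₂)⁻¹ with hN
  -- the key entry of N
  have hNjj : N j j * (a₀ / d (Sum.inr j)) = 1 := by
    have hMv : (1 - P.toBlocks₂₂) *ᵥ (fun _ => 1) =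
        fun c => if c = j then a₀ / d (Sum.inr j) else 0 := by
      funext c
      rw [Matrix.mulVec, dotProduct]
      simp only [mul_one]
      have : ∑ b, (1 - P.toBlocks₂₂) c b = 1 - ∑ b, P.toBlocks₂₂ c b := by
        simp [Matrix.sub_apply, Matrix.one_apply, Finset.sum_sub_distrib]
      rw [this, hrowsum]
      by_cases hc : c = j
      · subst hc; simp
      · simp [hc]
    have hNMv : N *ᵥ ((1 - P.toBlocks₂₂) *ᵥ (fun _ => 1)) = (fun _ => 1) := by
      rw [Matrix.mulVec_mulVec, Matrix.nonsing_inv_mul _ hunit, Matrix.one_mulVec]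
    rw [hMv] at hNMv
    have := congrFun hNMv j
    rw [Matrix.mulVec, dotProduct] at this
    rw [Finset.sum_eq_single j (fun b _ hb => by simp [hb]) (by simp)] at this
    simpa using this
  -- now the final entrywise computation
  funext x y
  -- LHS
  have hLHS : ((Matrix.diagonal d₁)⁻¹ * A₁) x y =
      (d (Sum.inl x))⁻¹ * (A (Sum.inl x) (Sum.inl y) + (if x = i ∧ y = i then a₀ else 0)) := by
    rw [hinvd₁, Matrix.diagonal_mul, hA₁]
    simp only [Matrix.add_apply, Matrix.smul_apply, Matrix.single, Matrix.of_apply,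
      smul_eq_mul, hd₁eq]
    congr 2
    by_cases h : x = i ∧ y = i
    · rw [if_pos h, if_pos ⟨h.1.symm, h.2.symm⟩, mul_one]
    · rw [if_neg h, if_neg (fun hc => h ⟨hc.1.symm, hc.2.symm⟩), mul_zero]
  -- RHS second term
  have hP12 : ∀ c, P.toBlocks₁₂ x c =
      (d (Sum.inl x))⁻¹ * (if x = i ∧ c = j then a₀ else 0) := by
    intro c
    rw [show P.toBlocks₁₂ x c = P (Sum.inl x) (Sum.inr c) from rfl, hPapp, hA12]
  have hP21 : ∀ c, P.toBlocks₂₁ c y =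
      (d (Sum.inr c))⁻¹ * (if y = i ∧ c = j then a₀ else 0) := by
    intro c
    rw [show P.toBlocks₂₁ c y = P (Sum.inr c) (Sum.inl y) from rfl, hPapp, hA21]
  have hterm : ∀ c, (∑ c', P.toBlocks₁₂ x c' * N c' c) * P.toBlocks₂₁ c y =
      (if x = i ∧ y = i ∧ c = j then (d (Sum.inl i))⁻¹ * a₀ * N j j * ((d (Sum.inr j))⁻¹ * a₀)
        else 0) := by
    intro c
    rw [Finset.sum_eq_single j
      (fun c' _ hc' => by rw [hP12 c', if_neg (fun h => hc' h.2)]; ring)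
      (by simp)]
    rw [hP12 j, hP21 c]
    by_cases hx : x = i
    · by_cases hy : y = i
      · by_cases hc : c = j
        · rw [hx, hy, hc]
          simp only [eq_self_iff_true, and_self, if_true]
        · simp [hx, hy, hc]
      · simp [hx, hy]
    · simp [hx]
  have hRHS2 : ∑ c, (∑ c', P.toBlocks₁₂ x c' * N c' c) * P.toBlocks₂₁ c y =
      (if x = i ∧ y = i then (d (Sum.inl i))⁻¹ * a₀ else 0) := by
    rw [Finset.sum_congr rfl (fun c _ => hterm c)]
    by_cases hx : x = i
    · by_cases hy : y = i
      · rw [Finset.sum_eq_single j (fun c _ hc => by simp [hc]) (by simp)]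
        simp only [hx, hy, and_self, if_true, true_and]
        have : (d (Sum.inl i))⁻¹ * a₀ * N j j * ((d (Sum.inr j))⁻¹ * a₀)
            = (d (Sum.inl i))⁻¹ * a₀ * (N j j * (a₀ / d (Sum.inr j))) := by ring
        rw [this, hNjj, mul_one]
      · simp [hy]
    · simp [hx]
  rw [hLHS, Matrix.add_apply, Matrix.mul_apply]
  simp only [Matrix.mul_apply]
  rw [hRHS2, show P.toBlocks₁₁ x y = P (Sum.inl x) (Sum.inl y) from rfl, hPapp]
  by_cases h : x = i ∧ y = i
  · rw [if_pos h, if_pos h]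
    obtain ⟨hx, hy⟩ := h
    subst hx; subst hy
    ring
  · rw [if_neg h, if_neg h]
    ring
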